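/- arXiv:1310.8280 — 2 statements merged into one kernel-verified Lean document; each statement's English description precedes it below -/
import Mathlib

section
/- Let m ≥ 1. Let G be the space of complex invertible lower triangular m×m matrices and let U be the space of complex symmetric m×m matrices A with det(A^{(k)}) ≠ 0 for all k = 1, …, m, both with the subspace topology from the space of m×m complex matrices. Then the map p : G → U given by p(B) = B · Bᵀ is a covering map. -/
open Matrix

namespace CholeskyAux


open Complex

variable {n m : ℕ}

/-- Lower triangular predicate. -/
def Lower (M : Matrix (Fin n) (Fin n) ℂ) : Prop := ∀ i j : Fin n, i < j → M i j = 0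

lemma Lower.bt {M : Matrix (Fin n) (Fin n) ℂ} (h : Lower M) :
    M.BlockTriangular OrderDual.toDual := fun i j hij => h i j (by exact hij)

lemma Lower.det_eq {M : Matrix (Fin n) (Fin n) ℂ} (h : Lower M) :
    M.det = ∏ i, M i i := Matrix.det_of_lowerTriangular M h.bt

lemma Lower.diag_ne_zero {M : Matrix (Fin n) (Fin n) ℂ} (h : Lower M) (hd : M.det ≠ 0)
    (i : Fin n) : M i i ≠ 0 := by
  rw [h.det_eq] at hd
  exact Finset.prod_ne_zero_iff.mp hd i (Finset.mem_univ i)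

lemma Upper_of_trans {M : Matrix (Fin n) (Fin n) ℂ} (h : Lower M) :
    Mᵀ.BlockTriangular id := fun i j hij => h j i hij

lemma cholesky_unique {B C : Matrix (Fin n) (Fin n) ℂ}
    (hB : Lower B) (hC : Lower C) (hdB : B.det ≠ 0) (hdC : C.det ≠ 0)
    (h : B * Bᵀ = C * Cᵀ) :
    ∃ d : Fin n → ℂ, (∀ i, d i = 1 ∨ d i = -1) ∧ B = C * diagonal d := by
  have hdBu : IsUnit B.det := isUnit_iff_ne_zero.2 hdB
  have hdCu : IsUnit C.det := isUnit_iff_ne_zero.2 hdC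
  have hdBtu : IsUnit Bᵀ.det := by rwa [det_transpose]
  have hdCtu : IsUnit Cᵀ.det := by rwa [det_transpose]
  haveI : Invertible C := C.invertibleOfIsUnitDet hdCu
  haveI : Invertible Bᵀ := Bᵀ.invertibleOfIsUnitDet hdBtu
  set N := C⁻¹ * B with hNdef
  have hCN : C * N = B := by
    rw [hNdef, ← Matrix.mul_assoc, Matrix.mul_nonsing_inv _ hdCu, Matrix.one_mul]
  have hNBt : N * Bᵀ = Cᵀ := by
    rw [hNdef, Matrix.mul_assoc, h, ← Matrix.mul_assoc, Matrix.nonsing_inv_mul _ hdCu,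
      Matrix.one_mul]
  have hN2 : N = Cᵀ * (Bᵀ)⁻¹ := by
    rw [← hNBt, Matrix.mul_assoc, Matrix.mul_nonsing_inv _ hdBtu, Matrix.mul_one]
  -- N is lower triangular
  have hNl : N.BlockTriangular OrderDual.toDual :=
    ((blockTriangular_inv_of_blockTriangular hC.bt).mul hB.bt)
  -- N is upper triangular
  have hNu : N.BlockTriangular id := by
    rw [hN2]
    exact (Upper_of_trans hC).mul (blockTriangular_inv_of_blockTriangular (Upper_of_trans hB))
  set d : Fin n → ℂ := fun i => N i i with hddef
  have hNd : N = diagonal d := by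
    ext i j
    rcases lt_trichotomy i j with hij | hij | hij
    · rw [hNl (by exact hij), diagonal_apply_ne _ (ne_of_lt hij)]
    · subst hij; rw [diagonal_apply_eq]
    · rw [hNu (by exact hij), diagonal_apply_ne _ (ne_of_gt hij)]
  have hNNt : N * Nᵀ = 1 := by
    have : N * Nᵀ = C⁻¹ * (B * Bᵀ) * (C⁻¹)ᵀ := by
      rw [hNdef, Matrix.transpose_mul]
      noncomm_ring
    rw [this, h, Matrix.transpose_nonsing_inv, ← Matrix.mul_assoc, Matrix.mul_assoc (C⁻¹ * C),
      Matrix.mul_nonsing_inv _ hdCtu, Matrix.nonsing_inv_mul _ hdCu, Matrix.mul_one]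
  refine ⟨d, fun i => ?_, by rw [← hNd, hCN]⟩
  have := congrFun (congrFun hNNt i) i
  rw [hNd, diagonal_transpose, diagonal_mul_diagonal] at this
  have h1 : d i * d i = 1 := by
    simpa using this
  exact mul_self_eq_one_iff.mp h1



/-- The set of matrices with all leading principal minors nonzero (including `k = 0`). -/
def Mins (n : ℕ) : Set (Matrix (Fin n) (Fin n) ℂ) :=
  {A | ∀ k (hk : k ≤ n), (A.submatrix (Fin.castLE hk) (Fin.castLE hk)).det ≠ 0}

lemma submatrix_lower {M : Matrix (Fin m) (Fin m) ℂ} (h : Lower M) {k : ℕ} (hk : k ≤ m) :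
    Lower (M.submatrix (Fin.castLE hk) (Fin.castLE hk)) := by
  intro i j hij
  refine h _ _ ?_
  rw [Fin.lt_def] at hij ⊢
  simpa using hij

lemma mul_transpose_submatrix {M : Matrix (Fin m) (Fin m) ℂ} (h : Lower M) {k : ℕ} (hk : k ≤ m) :
    (M * Mᵀ).submatrix (Fin.castLE hk) (Fin.castLE hk)
      = (M.submatrix (Fin.castLE hk) (Fin.castLE hk))
        * (M.submatrix (Fin.castLE hk) (Fin.castLE hk))ᵀ := by
  ext i j
  simp only [submatrix_apply, mul_apply, transpose_apply]
  have hmap : ∑ x : Fin k, M (Fin.castLE hk i) (Fin.castLE hk x)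
        * M (Fin.castLE hk j) (Fin.castLE hk x)
      = ∑ l ∈ Finset.univ.map (Fin.castLEEmb hk),
          M (Fin.castLE hk i) l * M (Fin.castLE hk j) l := by
    rw [Finset.sum_map]
    rfl
  rw [hmap]
  refine (Finset.sum_subset (Finset.subset_univ _) ?_).symm
  intro l _ hl
  have hlk : ¬ (l : ℕ) < k := by
    intro hcon
    exact hl (by simpa [Fin.castLEEmb, Finset.mem_map] using
      ⟨⟨(l : ℕ), hcon⟩, by ext; simp⟩)
  have : Fin.castLE hk i < l := by
    rw [Fin.lt_def]
    simp only [Fin.coe_castLE]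
    omega
  rw [h _ _ this, zero_mul]

lemma mem_Mins_of_mul_transpose {M : Matrix (Fin m) (Fin m) ℂ} (h : Lower M)
    (hd : M.det ≠ 0) : M * Mᵀ ∈ Mins m := by
  intro k hk
  rw [mul_transpose_submatrix h hk, det_mul, det_transpose]
  have hsub : (M.submatrix (Fin.castLE hk) (Fin.castLE hk)).det ≠ 0 := by
    rw [Matrix.det_of_lowerTriangular _ (fun i j hij => (submatrix_lower h hk) i j hij)]
    refine Finset.prod_ne_zero_iff.mpr fun i _ => ?_
    have : ∀ l, M l l ≠ 0 := by
      intro l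
      have := Matrix.det_of_lowerTriangular M (fun i j hij => h i j hij)
      rw [this] at hd
      exact Finset.prod_ne_zero_iff.mp hd l (Finset.mem_univ l)
    exact this _
  exact mul_ne_zero hsub hsub

lemma isOpen_Mins : IsOpen (Mins n) := by
  have : Mins n = ⋂ k : Fin (n + 1),
      {A : Matrix (Fin n) (Fin n) ℂ |
        (A.submatrix (Fin.castLE (Nat.lt_succ_iff.mp k.isLt))
          (Fin.castLE (Nat.lt_succ_iff.mp k.isLt))).det ≠ 0} := by
    ext A
    constructor
    · intro hA
      exact Set.mem_iInter.mpr fun k => hA _ _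
    · intro hA k hk
      exact Set.mem_iInter.mp hA ⟨k, Nat.lt_succ_of_le hk⟩
  rw [this]
  refine isOpen_iInter_of_finite fun k => ?_
  have hc : Continuous fun A : Matrix (Fin n) (Fin n) ℂ =>
      (A.submatrix (Fin.castLE (Nat.lt_succ_iff.mp k.isLt))
        (Fin.castLE (Nat.lt_succ_iff.mp k.isLt))).det :=
    (continuous_id.matrix_submatrix _ _).matrix_det
  exact isOpen_compl_singleton.preimage hc

lemma det_mem_Mins {A : Matrix (Fin n) (Fin n) ℂ} (hA : A ∈ Mins n) : A.det ≠ 0 := by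
  have := hA n le_rfl
  have hid : A.submatrix (Fin.castLE (le_refl n)) (Fin.castLE (le_refl n)) = A := by
    ext i j; rfl
  rwa [hid] at this



/-- Build an even covering at `x₀` from disjoint continuous sections over an open set `V`,
together with a "labelling" of the fiber points. -/
lemma isEvenlyCovered_of_sections {E X I : Type*} [TopologicalSpace E] [TopologicalSpace X]
    [TopologicalSpace I] [DiscreteTopology I]
    (f : E → X) (hf : Continuous f) (x₀ : X) (V : Set X) (hV : IsOpen V) (hx₀ : x₀ ∈ V)
    (s : I → X → E) (hs : ∀ i, ContinuousOn (s i) V)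
    (hfs : ∀ i, ∀ x ∈ V, f (s i x) = x)
    (ℓ : E → I) (hinv : ∀ e, f e ∈ V → s (ℓ e) (f e) = e)
    (hℓs : ∀ i, ∀ x ∈ V, ℓ (s i x) = i)
    (hℓ : ∀ i, IsOpen {e | f e ∈ V ∧ ℓ e = i}) :
    IsEvenlyCovered f x₀ I := by
  refine IsEvenlyCovered.of_trivialization (t := ?t) ?hx
  case t =>
    exact { baseSet := V, open_baseSet := hV,
            source_eq := rfl, target_eq := rfl,
            proj_toFun := fun e _ => rfl,
            toOpenPartialHomeomorph :=
    { toFun := fun e => (f e, ℓ e)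
      invFun := fun q => s q.2 q.1
      source := f ⁻¹' V
      target := V ×ˢ (Set.univ : Set I)
      map_source' := fun e he => ⟨he, Set.mem_univ _⟩
      map_target' := fun q hq => by
        simp only [Set.mem_preimage]
        rw [hfs q.2 q.1 hq.1]
        exact hq.1
      left_inv' := fun e he => hinv e he
      right_inv' := fun q hq => by
        have h1 := hfs q.2 q.1 hq.1
        have h2 := hℓs q.2 q.1 hq.1
        simp only [h1, h2]
      open_source := hV.preimage hf
      open_target := hV.prod isOpen_univ
      continuousOn_toFun := by
        refine ContinuousOn.prodMk (hf.continuousOn) ?_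
        intro e he
        refine ContinuousAt.continuousWithinAt ?_
        have hopen := hℓ (ℓ e)
        have hmem : e ∈ {e' | f e' ∈ V ∧ ℓ e' = ℓ e} := ⟨he, rfl⟩
        have : ℓ =ᶠ[nhds e] fun _ => ℓ e := by
          filter_upwards [hopen.mem_nhds hmem] with a ha using ha.2
        exact ContinuousAt.congr continuousAt_const this.symm
      continuousOn_invFun := by
        rintro ⟨x, i⟩ hq
        have hsub : (V ×ˢ (Set.univ : Set I)) ∩ (Set.univ ×ˢ ({i} : Set I))
            = V ×ˢ ({i} : Set I) := by
          rw [Set.prod_inter_prod, Set.inter_univ, Set.univ_inter]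
        have hmem : (Set.univ ×ˢ ({i} : Set I)) ∈ nhds (x, i) :=
          (isOpen_univ.prod (isOpen_discrete _)).mem_nhds ⟨Set.mem_univ _, rfl⟩
        rw [← continuousWithinAt_inter hmem, hsub]
        have hcont : ContinuousOn (fun q : X × I => s i q.1) (V ×ˢ ({i} : Set I)) := by
          refine (hs i).comp continuous_fst.continuousOn ?_
          intro q hq'
          exact hq'.1
        refine (hcont ⟨x, i⟩ ⟨hq.1, rfl⟩).congr ?_ rfl
        intro q hq'
        have : q.2 = i := hq'.2
        simp [this] }}
  case hx => exact hx₀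



lemma continuousOn_matrix {X : Type*} [TopologicalSpace X] {a b : ℕ}
    {f : X → Matrix (Fin a) (Fin b) ℂ} {s : Set X}
    (h : ∀ i j, ContinuousOn (fun x => f x i j) s) : ContinuousOn f s := by
  have : ∀ i, ContinuousOn (fun x => f x i) s := fun i => continuousOn_pi.2 (h i)
  exact continuousOn_pi.2 this

/-- upper-left `n × n` corner of an `(n+1) × (n+1)` matrix -/
def cor (A : Matrix (Fin (n + 1)) (Fin (n + 1)) ℂ) : Matrix (Fin n) (Fin n) ℂ :=
  A.submatrix (Fin.castAdd 1) (Fin.castAdd 1)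

lemma continuous_cor : Continuous (cor (n := n)) :=
  continuous_id.matrix_submatrix _ _

lemma cor_symm {A : Matrix (Fin (n + 1)) (Fin (n + 1)) ℂ} (hA : Aᵀ = A) :
    (cor A)ᵀ = cor A := by
  ext i j
  exact congrFun (congrFun hA _) _

lemma cor_mins {A : Matrix (Fin (n + 1)) (Fin (n + 1)) ℂ} (hA : A ∈ Mins (n + 1)) :
    cor A ∈ Mins n := by
  intro k hk
  have := hA k (hk.trans n.le_succ)
  have hcomp : (cor A).submatrix (Fin.castLE hk) (Fin.castLE hk)
      = A.submatrix (Fin.castLE (hk.trans n.le_succ)) (Fin.castLE (hk.trans n.le_succ)) := by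
    ext i j; rfl
  rwa [hcomp]

lemma cor_det_ne {A : Matrix (Fin (n + 1)) (Fin (n + 1)) ℂ} (hA : A ∈ Mins (n + 1)) :
    (cor A).det ≠ 0 := by
  have := hA n n.le_succ
  have hcomp : (cor A) = A.submatrix (Fin.castLE n.le_succ) (Fin.castLE n.le_succ) := by
    ext i j; rfl
  rwa [hcomp]

lemma det_ne_of_mins {A : Matrix (Fin n) (Fin n) ℂ} (hA : A ∈ Mins n) : A.det ≠ 0 := by
  have := hA n le_rfl
  have hid : A.submatrix (Fin.castLE (le_refl n)) (Fin.castLE (le_refl n)) = A := by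
    ext i j; rfl
  rwa [hid] at this

lemma exists_section : ∀ (n : ℕ) (A₀ : Matrix (Fin n) (Fin n) ℂ), A₀ᵀ = A₀ → A₀ ∈ Mins n →
    ∃ (V : Set (Matrix (Fin n) (Fin n) ℂ))
      (s : Matrix (Fin n) (Fin n) ℂ → Matrix (Fin n) (Fin n) ℂ),
      IsOpen V ∧ A₀ ∈ V ∧ V ⊆ Mins n ∧ ContinuousOn s (V ∩ {A | Aᵀ = A}) ∧
      ∀ A, A ∈ V → Aᵀ = A → Lower (s A) ∧ (s A).det ≠ 0 ∧ s A * (s A)ᵀ = A := by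
  intro n
  induction n with
  | zero =>
    intro A₀ _ _
    refine ⟨Set.univ, fun _ => 1, isOpen_univ, trivial, ?_, continuousOn_const, ?_⟩
    · intro A _ k hk
      interval_cases k
      rw [Matrix.det_isEmpty]
      exact one_ne_zero
    · intro A _ _
      refine ⟨fun i => i.elim0, ?_, ?_⟩
      · rw [Matrix.det_one]; exact one_ne_zero
      · ext i j; exact i.elim0
  | succ n ih =>
    intro A₀ hA₀s hA₀m
    obtain ⟨V', s', hV'o, hA₀'V, hV'min, hs'c, hs'p⟩ := ih (cor A₀) (cor_symm hA₀s) (cor_mins hA₀m)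
    classical
    set e : Fin n ⊕ Fin 1 ≃ Fin (n + 1) := finSumFinEquiv with he
    set c : Matrix (Fin (n + 1)) (Fin (n + 1)) ℂ → ℂ := fun A => A.det / (cor A).det with hc
    have hc₀ : c A₀ ≠ 0 := div_ne_zero (det_ne_of_mins hA₀m) (cor_det_ne hA₀m)
    set u₀ : ℂ := Complex.exp (Complex.log (c A₀) / 2) with hu₀def
    have hu₀ : u₀ ≠ 0 := Complex.exp_ne_zero _
    have hu₀sq : u₀ ^ 2 = c A₀ := by
      rw [hu₀def, sq, ← Complex.exp_add]
      have : Complex.log (c A₀) / 2 + Complex.log (c A₀) / 2 = Complex.log (c A₀) := by ring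
      rw [this, Complex.exp_log hc₀]
    set q : Matrix (Fin (n + 1)) (Fin (n + 1)) ℂ → ℂ := fun A => c A / u₀ ^ 2 with hq
    set b : Matrix (Fin (n + 1)) (Fin (n + 1)) ℂ → ℂ :=
      fun A => u₀ * Complex.exp (Complex.log (q A) / 2) with hb
    set W : Set (Matrix (Fin (n + 1)) (Fin (n + 1)) ℂ) :=
      {A | cor A ∈ V'} ∩ Mins (n + 1) with hW
    set V : Set (Matrix (Fin (n + 1)) (Fin (n + 1)) ℂ) :=
      W ∩ q ⁻¹' Complex.slitPlane with hV
    -- auxiliary data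
    set w : Matrix (Fin (n + 1)) (Fin (n + 1)) ℂ → Fin n → ℂ :=
      fun A j => A (Fin.natAdd n 0) (Fin.castAdd 1 j) with hw
    set Bm : Matrix (Fin (n + 1)) (Fin (n + 1)) ℂ → Matrix (Fin n) (Fin n) ℂ :=
      fun A => s' (cor A) with hBm
    set v : Matrix (Fin (n + 1)) (Fin (n + 1)) ℂ → Fin n → ℂ :=
      fun A => (Bm A)⁻¹ *ᵥ w A with hv
    set s : Matrix (Fin (n + 1)) (Fin (n + 1)) ℂ → Matrix (Fin (n + 1)) (Fin (n + 1)) ℂ :=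
      fun A => (fromBlocks (Bm A) 0 (Matrix.of fun _ (j : Fin n) => v A j)
        (Matrix.of fun _ _ => b A)).submatrix e.symm e.symm with hs
    -- continuity of c and q on W
    have hdetcor : ∀ A ∈ W, (cor A).det ≠ 0 := fun A hA => cor_det_ne hA.2
    have hcq : ContinuousOn q W := by
      refine ContinuousOn.div ?_ ?_ ?_
      · exact (continuous_id.matrix_det.continuousOn).div
          ((continuous_cor.matrix_det).continuousOn) hdetcor
      · exact continuousOn_const
      · intro A _
        exact pow_ne_zero 2 hu₀
    have hWopen : IsOpen W := by
      refine IsOpen.inter ?_ isOpen_Mins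
      exact hV'o.preimage continuous_cor
    have hVopen : IsOpen V := hcq.isOpen_inter_preimage hWopen Complex.isOpen_slitPlane
    have hA₀V : A₀ ∈ V := by
      refine ⟨⟨hA₀'V, hA₀m⟩, ?_⟩
      have : q A₀ = 1 := by
        rw [hq]; simp only []
        rw [hu₀sq, div_self hc₀]
      simp only [Set.mem_preimage, this]
      exact Complex.one_mem_slitPlane
    -- basic facts about points of V
    have hVfacts : ∀ A ∈ V, Aᵀ = A →
        Lower (Bm A) ∧ (Bm A).det ≠ 0 ∧ Bm A * (Bm A)ᵀ = cor A := by
      intro A hA hAs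
      exact hs'p (cor A) hA.1.1 (cor_symm hAs)
    have hbne : ∀ A, b A ≠ 0 := fun A => mul_ne_zero hu₀ (Complex.exp_ne_zero _)
    have hbsq : ∀ A ∈ V, (b A) ^ 2 = c A := by
      intro A hA
      have hqA : q A ≠ 0 := Complex.slitPlane_ne_zero hA.2
      have h2 : Complex.exp (Complex.log (q A) / 2) ^ 2 = q A := by
        rw [sq, ← Complex.exp_add]
        rw [show Complex.log (q A) / 2 + Complex.log (q A) / 2 = Complex.log (q A) by ring,
          Complex.exp_log hqA]
      have hbA : b A = u₀ * Complex.exp (Complex.log (q A) / 2) := rfl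
      have hqA' : q A = c A / u₀ ^ 2 := rfl
      rw [hbA, mul_pow, h2, hqA', mul_div_cancel₀ _ (pow_ne_zero 2 hu₀)]
    -- value/index conversion helpers
    have hvall : ∀ (i : Fin (n + 1)) (i' : Fin n), e.symm i = Sum.inl i' → (i : ℕ) = (i' : ℕ) := by
      intro i i' hi
      have : i = e (Sum.inl i') := by rw [← hi, Equiv.apply_symm_apply]
      rw [this, he, finSumFinEquiv_apply_left]
      simp
    have hvalr : ∀ (i : Fin (n + 1)) (i' : Fin 1), e.symm i = Sum.inr i' → (i : ℕ) = n := by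
      intro i i' hi
      have h0 : i' = 0 := Subsingleton.elim _ _
      have : i = e (Sum.inr i') := by rw [← hi, Equiv.apply_symm_apply]
      rw [this, he, finSumFinEquiv_apply_right, h0]
      simp
    -- the main properties
    have hprop : ∀ A, A ∈ V → Aᵀ = A → Lower (s A) ∧ (s A).det ≠ 0 ∧ s A * (s A)ᵀ = A := by
      intro A hA hAs
      obtain ⟨hBl, hBd, hBB⟩ := hVfacts A hA hAs
      have hBu : IsUnit (Bm A).det := isUnit_iff_ne_zero.2 hBd
      have hBtu : IsUnit (Bm A)ᵀ.det := by rwa [det_transpose]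
      set Vr : Matrix (Fin 1) (Fin n) ℂ := Matrix.of fun _ j => v A j with hVrdef
      set bb : Matrix (Fin 1) (Fin 1) ℂ := Matrix.of fun _ _ => b A with hbbdef
      set M : Matrix (Fin n ⊕ Fin 1) (Fin n ⊕ Fin 1) ℂ := fromBlocks (Bm A) 0 Vr bb with hMdef
      have hsA : s A = M.submatrix e.symm e.symm := rfl
      have hlow : Lower (s A) := by
        intro i j hij
        rw [hsA, submatrix_apply]
        have hij' : (i : ℕ) < (j : ℕ) := hij
        rcases hi : e.symm i with i' | i' <;> rcases hj : e.symm j with j' | j'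
        · rw [hMdef, fromBlocks_apply₁₁]
          refine hBl i' j' ?_
          rw [Fin.lt_def, ← hvall i i' hi, ← hvall j j' hj]
          exact hij'
        · rw [hMdef, fromBlocks_apply₁₂, Matrix.zero_apply]
        · exfalso
          have h1 := hvalr i i' hi
          have h2 := hvall j j' hj
          have := j'.isLt
          omega
        · exfalso
          have h1 := hvalr i i' hi
          have h2 := hvalr j j' hj
          omega
      have hdetM : (s A).det = (Bm A).det * b A := by
        rw [hsA, det_submatrix_equiv_self, hMdef, det_fromBlocks_zero₁₂, det_fin_one]
        rfl
      have hdets : (s A).det ≠ 0 := by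
        rw [hdetM]
        exact mul_ne_zero hBd (hbne A)
      -- block identities
      set wc : Matrix (Fin n) (Fin 1) ℂ := Matrix.of fun i _ => w A i with hwcdef
      have hBv : Bm A * Vrᵀ = wc := by
        ext i k
        have h1 : (Bm A * Vrᵀ) i k = (Bm A *ᵥ v A) i := by
          simp [mul_apply, Matrix.mulVec, dotProduct, hVrdef]
        have h2 : Bm A *ᵥ v A = w A := by
          rw [hv]
          show Bm A *ᵥ ((Bm A)⁻¹ *ᵥ w A) = w A
          rw [Matrix.mulVec_mulVec, Matrix.mul_nonsing_inv _ hBu, Matrix.one_mulVec]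
        rw [h1, h2]
        rfl
      set a : ℂ := A (Fin.natAdd n 0) (Fin.natAdd n 0) with hadef
      set aM : Matrix (Fin 1) (Fin 1) ℂ := Matrix.of fun _ _ => a with haMdef
      have hAblocks : A.submatrix e e = fromBlocks (cor A) wc wcᵀ aM := by
        ext i j
        rcases i with i | i <;> rcases j with j | j
        · rw [submatrix_apply, fromBlocks_apply₁₁, he, finSumFinEquiv_apply_left,
            finSumFinEquiv_apply_left]
          rfl
        · rw [submatrix_apply, fromBlocks_apply₁₂, he, finSumFinEquiv_apply_left,
            finSumFinEquiv_apply_right]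
          have hj : j = 0 := Subsingleton.elim _ _
          subst hj
          have := congrFun (congrFun hAs (Fin.castAdd 1 i)) (Fin.natAdd n 0)
          rw [transpose_apply] at this
          exact this.symm
        · rw [submatrix_apply, fromBlocks_apply₂₁, he, finSumFinEquiv_apply_right,
            finSumFinEquiv_apply_left]
          have hi : i = 0 := Subsingleton.elim _ _
          subst hi
          rfl
        · rw [submatrix_apply, fromBlocks_apply₂₂, he, finSumFinEquiv_apply_right,
            finSumFinEquiv_apply_right]
          have hi : i = 0 := Subsingleton.elim _ _
          have hj : j = 0 := Subsingleton.elim _ _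
          subst hi; subst hj
          rfl
      have hcordet : (cor A).det ≠ 0 := cor_det_ne hA.1.2
      haveI : Invertible (cor A) := (cor A).invertibleOfIsUnitDet (isUnit_iff_ne_zero.2 hcordet)
      have hdetA : A.det = (cor A).det * (aM - wcᵀ * (cor A)⁻¹ * wc).det := by
        rw [← det_submatrix_equiv_self e, hAblocks, det_fromBlocks₁₁, invOf_eq_nonsing_inv]
      have hX : wcᵀ * (cor A)⁻¹ * wc = Vr * Vrᵀ := by
        have h1 : (cor A)⁻¹ = ((Bm A)⁻¹)ᵀ * (Bm A)⁻¹ := by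
          rw [← hBB, Matrix.mul_inv_rev, Matrix.transpose_nonsing_inv]
        rw [h1, ← hBv, Matrix.transpose_mul, Matrix.transpose_transpose]
        simp only [Matrix.mul_assoc]
        rw [Matrix.nonsing_inv_mul_cancel_left _ _ hBu, Matrix.transpose_nonsing_inv,
          Matrix.mul_nonsing_inv_cancel_left _ _ hBtu]
      have hschur : a - (Vr * Vrᵀ) 0 0 = c A := by
        have hd1 : (aM - wcᵀ * (cor A)⁻¹ * wc).det = a - (Vr * Vrᵀ) 0 0 := by
          rw [det_fin_one, hX, Matrix.sub_apply]
          rfl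
        rw [hd1] at hdetA
        have : a - (Vr * Vrᵀ) 0 0 = A.det / (cor A).det := by
          rw [eq_div_iff hcordet, mul_comm]
          exact hdetA.symm
        exact this
      have h22 : Vr * Vrᵀ + bb * bbᵀ = aM := by
        ext ii jj
        have hii : ii = 0 := Subsingleton.elim _ _
        have hjj : jj = 0 := Subsingleton.elim _ _
        subst hii; subst hjj
        have hbbe : (bb * bbᵀ) 0 0 = b A * b A := by
          simp [mul_apply, hbbdef]
        rw [Matrix.add_apply, hbbe]
        have : b A * b A = c A := by
          have := hbsq A hA
          rwa [sq] at this
        rw [this, ← hschur]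
        show (Vr * Vrᵀ) 0 0 + (a - (Vr * Vrᵀ) 0 0) = aM 0 0
        rw [haMdef]
        simp [Matrix.of_apply]
      have hMM : M * Mᵀ = A.submatrix e e := by
        rw [hMdef, fromBlocks_transpose, fromBlocks_multiply, hAblocks]
        refine fromBlocks_inj.mpr ⟨?_, ?_, ?_, ?_⟩
        · rw [Matrix.transpose_zero, Matrix.mul_zero, add_zero, hBB]
        · rw [Matrix.zero_mul, add_zero, hBv]
        · rw [Matrix.transpose_zero, Matrix.mul_zero, add_zero, ← hBv, Matrix.transpose_mul,
            Matrix.transpose_transpose]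
        · exact h22
      have hfinal : s A * (s A)ᵀ = A := by
        rw [hsA, transpose_submatrix, submatrix_mul_equiv, hMM, submatrix_submatrix]
        rw [Equiv.self_comp_symm]
        exact submatrix_id_id A
      exact ⟨hlow, hdets, hfinal⟩
    -- continuity of the section
    set T : Set (Matrix (Fin (n + 1)) (Fin (n + 1)) ℂ) := V ∩ {A | Aᵀ = A} with hT
    have hTW : T ⊆ W := fun A hA => hA.1.1
    have hmapsTo : Set.MapsTo cor T (V' ∩ {A : Matrix (Fin n) (Fin n) ℂ | Aᵀ = A}) :=
      fun A hA => ⟨hA.1.1.1, cor_symm hA.2⟩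
    have hBmC : ContinuousOn Bm T :=
      hs'c.comp continuous_cor.continuousOn hmapsTo
    have hdetBmne : ∀ A ∈ T, (Bm A).det ≠ 0 := fun A hA => (hVfacts A hA.1 hA.2).2.1
    have hdetBmC : ContinuousOn (fun A => (Bm A).det) T :=
      (continuous_id.matrix_det).comp_continuousOn hBmC
    have hBinvC : ContinuousOn (fun A => (Bm A)⁻¹) T := by
      refine continuousOn_matrix fun i j => ?_
      have heq : (fun A => (Bm A)⁻¹ i j)
          = fun A => ((Bm A).det)⁻¹ * (Bm A).adjugate i j := by
        funext A
        rw [Matrix.inv_def, Matrix.smul_apply, Ring.inverse_eq_inv', smul_eq_mul]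
      rw [heq]
      refine ContinuousOn.mul (hdetBmC.inv₀ hdetBmne) ?_
      exact ((continuous_id.matrix_adjugate).matrix_elem i j).comp_continuousOn hBmC
    have hwC : ∀ j, ContinuousOn (fun A => w A j) T := fun j =>
      (continuous_id.matrix_elem _ _).continuousOn
    have hvC : ∀ j, ContinuousOn (fun A => v A j) T := by
      intro j
      have heq : (fun A => v A j) = fun A => ∑ l, (Bm A)⁻¹ j l * w A l := by
        funext A
        rfl
      rw [heq]
      refine continuousOn_finset_sum _ fun l _ => ContinuousOn.mul ?_ (hwC l)
      exact ((continuous_id.matrix_elem j l)).comp_continuousOn hBinvC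
    have hqT : ContinuousOn q T := hcq.mono hTW
    have hlogC : ContinuousOn (fun A => Complex.log (q A)) T := by
      intro A hA
      exact (continuousAt_clog hA.1.2).comp_continuousWithinAt (hqT A hA)
    have hbC : ContinuousOn b T := by
      refine continuousOn_const.mul ?_
      exact Complex.continuous_exp.comp_continuousOn (hlogC.div_const 2)
    have hsC : ContinuousOn s T := by
      refine continuousOn_matrix fun i j => ?_
      have hsij : (fun A => s A i j)
          = fun A => fromBlocks (Bm A) 0 (Matrix.of fun _ (j : Fin n) => v A j)
              (Matrix.of fun _ _ => b A) (e.symm i) (e.symm j) := rfl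
      rw [hsij]
      rcases hi : e.symm i with i' | i' <;> rcases hj : e.symm j with j' | j' <;>
        simp only [fromBlocks_apply₁₁, fromBlocks_apply₁₂, fromBlocks_apply₂₁,
          fromBlocks_apply₂₂, Matrix.zero_apply, Matrix.of_apply]
      · exact ((continuous_id.matrix_elem i' j')).comp_continuousOn hBmC
      · exact continuousOn_const
      · exact hvC j'
      · exact hbC
    exact ⟨V, s, hVopen, hA₀V, fun A hA => hA.1.2, hsC, hprop⟩



/-- The `±1` sign vectors. -/
def Signs (m : ℕ) : Type := {d : Fin m → ℂ // ∀ i, d i = 1 ∨ d i = -1}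

noncomputable instance (m : ℕ) : TopologicalSpace (Signs m) := instTopologicalSpaceSubtype

instance (m : ℕ) : T1Space (Signs m) := Subtype.t1Space

instance (m : ℕ) : Finite (Signs m) := by
  refine Finite.of_injective (fun d : Signs m => (fun i => d.1 i = 1 : Fin m → Prop)) ?_
  intro d d' h
  refine Subtype.ext (funext fun i => ?_)
  have hi : (d.1 i = 1) ↔ (d'.1 i = 1) := by
    have := congrFun h i
    simp only [eq_iff_iff] at this
    exact this
  rcases d.2 i with h1 | h1 <;> rcases d'.2 i with h2 | h2
  · rw [h1, h2]
  · exfalso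
    have h3 := hi.mp h1
    rw [h2] at h3
    norm_num at h3
  · exfalso
    have h3 := hi.mpr h2
    rw [h1] at h3
    norm_num at h3
  · rw [h1, h2]

instance (m : ℕ) : DiscreteTopology (Signs m) := Finite.instDiscreteTopology

lemma signs_mul_self (m : ℕ) (d : Signs m) (i : Fin m) : d.1 i * d.1 i = 1 := by
  rcases d.2 i with h | h <;> rw [h] <;> norm_num

lemma signs_ne_zero (m : ℕ) (d : Signs m) (i : Fin m) : d.1 i ≠ 0 := by
  rcases d.2 i with h | h <;> rw [h] <;> norm_num

lemma signs_eq_iff_ne_neg {x y : ℂ} (hx : x = 1 ∨ x = -1) (hy : y = 1 ∨ y = -1) :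
    x = y ↔ x ≠ -y := by
  rcases hx with h | h <;> rcases hy with h' | h' <;> rw [h, h'] <;> norm_num

end CholeskyAux

open CholeskyAux

/-- The map `B ↦ B * Bᵀ` from the space of complex invertible lower triangular
`m × m` matrices to the space of complex symmetric `m × m` matrices all of whose
leading principal minors are nonzero is a covering map. -/
theorem cholesky_covering_map (m : ℕ) (hm : 1 ≤ m) :
    ∃ p : {B : Matrix (Fin m) (Fin m) ℂ //
            (∀ i j : Fin m, i < j → B i j = 0) ∧ B.det ≠ 0} →
          {A : Matrix (Fin m) (Fin m) ℂ // Aᵀ = A ∧ ∀ k : ℕ, 1 ≤ k → ∀ hk : k ≤ m,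
            (A.submatrix (Fin.castLE hk) (Fin.castLE hk)).det ≠ 0},
      (∀ B, (p B : Matrix (Fin m) (Fin m) ℂ) =
        (B : Matrix (Fin m) (Fin m) ℂ) * (B : Matrix (Fin m) (Fin m) ℂ)ᵀ) ∧
      IsCoveringMap p := by
  classical
  set G := {B : Matrix (Fin m) (Fin m) ℂ //
      (∀ i j : Fin m, i < j → B i j = 0) ∧ B.det ≠ 0} with hG
  set U := {A : Matrix (Fin m) (Fin m) ℂ // Aᵀ = A ∧ ∀ k : ℕ, 1 ≤ k → ∀ hk : k ≤ m,
      (A.submatrix (Fin.castLE hk) (Fin.castLE hk)).det ≠ 0} with hU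
  set p : G → U := fun B => ⟨B.1 * B.1ᵀ,
    by rw [transpose_mul, transpose_transpose],
    fun k _ hk => mem_Mins_of_mul_transpose B.2.1 B.2.2 k hk⟩ with hp
  refine ⟨p, fun B => rfl, ?_⟩
  have hgc : Continuous fun B : G => B.1 * B.1ᵀ :=
    continuous_subtype_val.matrix_mul continuous_subtype_val.matrix_transpose
  have hpc : Continuous p := Continuous.subtype_mk hgc _
  intro x
  have hA₀s : (x.1)ᵀ = x.1 := x.2.1
  have hA₀m : x.1 ∈ Mins m := by
    intro k hk
    rcases Nat.eq_zero_or_pos k with h0 | h0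
    · subst h0
      rw [Matrix.det_isEmpty]
      exact one_ne_zero
    · exact x.2.2 k h0 hk
  obtain ⟨V, s, hVo, hA₀V, hVmins, hsC, hsP⟩ := exists_section m x.1 hA₀s hA₀m
  -- symmetric matrices of the form B * Bᵀ
  have hsymBB : ∀ B : G, (B.1 * B.1ᵀ)ᵀ = B.1 * B.1ᵀ := fun B => by
    rw [transpose_mul, transpose_transpose]
  -- default element of G
  have hGone : (∀ i j : Fin m, i < j → (1 : Matrix (Fin m) (Fin m) ℂ) i j = 0)
      ∧ (1 : Matrix (Fin m) (Fin m) ℂ).det ≠ 0 := by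
    refine ⟨fun i j hij => Matrix.one_apply_ne (ne_of_lt hij), ?_⟩
    rw [Matrix.det_one]; exact one_ne_zero
  -- the sections
  set sec : Signs m → U → G := fun d A =>
    if h : A.1 ∈ V then
      ⟨s A.1 * diagonal d.1,
        fun i j hij => by rw [Matrix.mul_diagonal, (hsP A.1 h A.2.1).1 i j hij, zero_mul],
        by
          rw [det_mul, det_diagonal]
          exact mul_ne_zero (hsP A.1 h A.2.1).2.1
            (Finset.prod_ne_zero_iff.mpr fun i _ => signs_ne_zero m d i)⟩
    else ⟨1, hGone⟩ with hsec
  have hsecval : ∀ (d : Signs m) (A : U), A.1 ∈ V → (sec d A).1 = s A.1 * diagonal d.1 := by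
    intro d A h
    rw [hsec]
    simp only [dif_pos h]
  have hDD : ∀ d : Signs m, diagonal d.1 * diagonal d.1 = (1 : Matrix (Fin m) (Fin m) ℂ) := by
    intro d
    rw [diagonal_mul_diagonal]
    have : (fun i => d.1 i * d.1 i) = fun _ => (1 : ℂ) := funext fun i => signs_mul_self m d i
    rw [this, diagonal_one]
  have hfs : ∀ (d : Signs m) (A : U), A.1 ∈ V → p (sec d A) = A := by
    intro d A h
    refine Subtype.ext ?_
    show (sec d A).1 * (sec d A).1ᵀ = A.1
    rw [hsecval d A h, transpose_mul, diagonal_transpose, Matrix.mul_assoc,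
      ← Matrix.mul_assoc (diagonal d.1), hDD, Matrix.one_mul, (hsP A.1 h A.2.1).2.2]
  -- the labelling
  set r : G → Fin m → ℂ := fun B i => B.1 i i / s (B.1 * B.1ᵀ) i i with hr
  set ℓ : G → Signs m := fun B =>
    if h : ∀ i, r B i = 1 ∨ r B i = -1 then ⟨r B, h⟩ else ⟨fun _ => 1, fun _ => Or.inl rfl⟩
    with hℓ
  -- key uniqueness fact
  have hkey : ∀ B : G, B.1 * B.1ᵀ ∈ V → ∃ d : Signs m,
      (∀ i, r B i = d.1 i) ∧ B.1 = s (B.1 * B.1ᵀ) * diagonal d.1 ∧ ℓ B = d := by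
    intro B hV'
    obtain ⟨hCl, hCd, hCC⟩ := hsP (B.1 * B.1ᵀ) hV' (hsymBB B)
    obtain ⟨d', hd'pm, hd'eq⟩ := cholesky_unique B.2.1 hCl B.2.2 hCd hCC.symm
    have hCdiag : ∀ i, s (B.1 * B.1ᵀ) i i ≠ 0 := Lower.diag_ne_zero hCl hCd
    have hratio : ∀ i, r B i = d' i := by
      intro i
      have hnum := congrFun (congrFun hd'eq i) i
      rw [Matrix.mul_diagonal] at hnum
      show B.1 i i / s (B.1 * B.1ᵀ) i i = d' i
      rw [hnum, mul_comm, mul_div_assoc, div_self (hCdiag i), mul_one]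
    refine ⟨⟨d', hd'pm⟩, hratio, hd'eq, ?_⟩
    have hcond : ∀ i, r B i = 1 ∨ r B i = -1 := by
      intro i
      rw [hratio i]
      exact hd'pm i
    rw [hℓ]
    dsimp only
    exact (dif_pos hcond).trans (Subtype.ext (funext hratio))
  -- continuity of the sections
  have hsecC : ∀ d : Signs m, ContinuousOn (sec d) (Subtype.val ⁻¹' V) := by
    intro d
    rw [continuousOn_iff_continuous_restrict]
    refine continuous_induced_rng.2 ?_
    have heq : Subtype.val ∘ (Subtype.val ⁻¹' V : Set U).domRestrict (sec d)
        = fun A => s A.1.1 * diagonal d.1 := by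
      funext A
      exact hsecval d A.1 A.2
    rw [heq]
    refine Continuous.matrix_mul ?_ continuous_const
    refine hsC.comp_continuous (continuous_subtype_val.comp continuous_subtype_val) ?_
    intro A
    exact ⟨A.2, A.1.2.1⟩
  -- the four hypotheses about the labelling
  have hinv : ∀ B : G, p B ∈ Subtype.val ⁻¹' V → sec (ℓ B) (p B) = B := by
    intro B h
    obtain ⟨d, hrat, hval, hℓB⟩ := hkey B h
    rw [hℓB]
    refine Subtype.ext ?_
    rw [hsecval d (p B) h]
    exact hval.symm
  have hℓsec : ∀ (d : Signs m) (A : U), A.1 ∈ V → ℓ (sec d A) = d := by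
    intro d A h
    have hpA : (sec d A).1 * (sec d A).1ᵀ = A.1 := congrArg Subtype.val (hfs d A h)
    have hBV : (sec d A).1 * (sec d A).1ᵀ ∈ V := by rw [hpA]; exact h
    obtain ⟨d₂, hrat, hval, hℓB⟩ := hkey (sec d A) hBV
    rw [hℓB]
    -- show d₂ = d
    have h1 : s A.1 * diagonal d₂.1 = s A.1 * diagonal d.1 := by
      rw [hpA] at hval
      rw [← hval, hsecval d A h]
    have hsdet : IsUnit (s A.1).det := isUnit_iff_ne_zero.2 (hsP A.1 h A.2.1).2.1
    have h2 : diagonal d₂.1 = diagonal d.1 := by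
      have := congrArg (fun M => (s A.1)⁻¹ * M) h1
      simpa only [Matrix.nonsing_inv_mul_cancel_left _ _ hsdet] using this
    refine Subtype.ext (funext fun i => ?_)
    have := congrFun (congrFun h2 i) i
    simpa only [Matrix.diagonal_apply_eq] using this
  have hopen : ∀ d : Signs m, IsOpen {B : G | p B ∈ Subtype.val ⁻¹' V ∧ ℓ B = d} := by
    intro d
    have hO : IsOpen {B : G | B.1 * B.1ᵀ ∈ V} := hVo.preimage hgc
    have hrC : ContinuousOn r {B : G | B.1 * B.1ᵀ ∈ V} := by
      refine continuousOn_pi.2 fun i => ?_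
      refine ContinuousOn.div ?_ ?_ ?_
      · exact ((continuous_subtype_val.matrix_elem i i)).continuousOn
      · refine Continuous.comp_continuousOn (continuous_id.matrix_elem i i) ?_
        refine hsC.comp hgc.continuousOn ?_
        intro B hB
        exact ⟨hB, hsymBB B⟩
      · intro B hB
        exact Lower.diag_ne_zero (hsP _ hB (hsymBB B)).1 (hsP _ hB (hsymBB B)).2.1 i
    have hWopen : IsOpen {z : Fin m → ℂ | ∀ i, z i ≠ -(d.1 i)} := by
      have : {z : Fin m → ℂ | ∀ i, z i ≠ -(d.1 i)}
          = ⋂ i, (fun z : Fin m → ℂ => z i) ⁻¹' ({-(d.1 i)}ᶜ) := by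
        ext z; simp [Set.mem_iInter]
      rw [this]
      exact isOpen_iInter_of_finite fun i =>
        isOpen_compl_singleton.preimage (continuous_apply i)
    have hSet : {B : G | p B ∈ Subtype.val ⁻¹' V ∧ ℓ B = d}
        = {B : G | B.1 * B.1ᵀ ∈ V} ∩ r ⁻¹' {z : Fin m → ℂ | ∀ i, z i ≠ -(d.1 i)} := by
      ext B
      constructor
      · rintro ⟨h1, h2⟩
        have h1' : B.1 * B.1ᵀ ∈ V := h1
        obtain ⟨d₂, hrat, _, hℓB⟩ := hkey B h1'
        refine ⟨h1', fun i => ?_⟩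
        rw [hrat i]
        have hd₂ : d₂ = d := by rw [← h2, hℓB]
        rw [hd₂]
        exact (signs_eq_iff_ne_neg (d.2 i) (d.2 i)).mp rfl
      · rintro ⟨h1, h2⟩
        obtain ⟨d₂, hrat, _, hℓB⟩ := hkey B h1
        refine ⟨h1, ?_⟩
        rw [hℓB]
        refine Subtype.ext (funext fun i => ?_)
        refine (signs_eq_iff_ne_neg (d₂.2 i) (d.2 i)).mpr ?_
        rw [← hrat i]
        exact h2 i
    rw [hSet]
    exact hrC.isOpen_inter_preimage hO hWopen
  exact IsEvenlyCovered.to_isEvenlyCovered_preimage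
    (isEvenlyCovered_of_sections p hpc x (Subtype.val ⁻¹' V)
      (hVo.preimage continuous_subtype_val) hA₀V sec hsecC hfs ℓ hinv hℓsec hopen)
end

section
/- Let m ≥ 1, let X be a topological space, and let φ : X → M_m(ℂ) be a continuous map into the space of complex m×m matrices such that for every s ∈ X and every k = 1, …, m, det(φ(s)^{(k)}) ≠ 0. Then there exist continuous maps B, C : X → M_m(ℂ) such that for every s ∈ X, B(s) is lower triangular, C(s) is upper triangular with all diagonal entries equal to 1, and φ(s) = B(s) · C(s). -/
open Matrix

private lemma cont_matrix_inv {X : Type*} [TopologicalSpace X] {n : Type*} [Fintype n]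
    [DecidableEq n] {M : X → Matrix n n ℂ} (hM : Continuous M) (h : ∀ s, (M s).det ≠ 0) :
    Continuous fun s => (M s)⁻¹ := by
  have : (fun s => (M s)⁻¹) = fun s => ((M s).det)⁻¹ • (M s).adjugate := by
    funext s; rw [Matrix.inv_def, Ring.inverse_eq_inv']
  rw [this]
  exact (hM.matrix_det.inv₀ h).smul hM.matrix_adjugate

private lemma lu_aux (n : ℕ) {X : Type*} [TopologicalSpace X]
    (φ : X → Matrix (Fin n) (Fin n) ℂ) (hφ : Continuous φ)
    (hdet : ∀ s : X, ∀ k : ℕ, ∀ hk : k ≤ n,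
      ((φ s).submatrix (Fin.castLE hk) (Fin.castLE hk)).det ≠ 0) :
    ∃ B C : X → Matrix (Fin n) (Fin n) ℂ,
      Continuous B ∧ Continuous C ∧
      ∀ s : X,
        (∀ i j : Fin n, i < j → B s i j = 0) ∧
        (∀ i j : Fin n, j < i → C s i j = 0) ∧
        (∀ i : Fin n, C s i i = 1) ∧
        φ s = B s * C s := by
  induction n with
  | zero =>
      exact ⟨fun _ => 1, fun _ => 1, continuous_const, continuous_const, fun s =>
        ⟨fun i => i.elim0, fun i => i.elim0, fun i => i.elim0, Subsingleton.elim _ _⟩⟩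
  | succ n ih =>
      set e : Fin n ⊕ Fin 1 ≃ Fin (n + 1) := finSumFinEquiv with he
      have hval1 : ∀ i : Fin n, (e (Sum.inl i) : ℕ) = i := by
        intro i; simp [he]
      have hval2 : ∀ i : Fin 1, (e (Sum.inr i) : ℕ) = n := by
        intro i; simp [he, Fin.fin_one_eq_zero i]
      set ψ : X → Matrix (Fin n) (Fin n) ℂ :=
        fun s => (φ s).submatrix (e ∘ Sum.inl) (e ∘ Sum.inl) with hψ
      have hcast : ∀ (k : ℕ) (hk : k ≤ n),
          (e ∘ Sum.inl) ∘ Fin.castLE hk = Fin.castLE (hk.trans n.le_succ) := by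
        intro k hk; funext x; ext; simp [hval1]
      have hψc : Continuous ψ := hφ.matrix_submatrix _ _
      have hψdet : ∀ s : X, ∀ k : ℕ, ∀ hk : k ≤ n,
          ((ψ s).submatrix (Fin.castLE hk) (Fin.castLE hk)).det ≠ 0 := by
        intro s k hk
        rw [hψ, Matrix.submatrix_submatrix, hcast k hk]
        exact hdet s k _
      have hψdet' : ∀ s : X, (ψ s).det ≠ 0 := by
        intro s
        have := hψdet s n le_rfl
        simpa using this
      obtain ⟨B', C', hB'c, hC'c, h'⟩ := ih ψ hψc hψdet
      have hdetC' : ∀ s, (C' s).det = 1 := by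
        intro s
        obtain ⟨-, h2, h3, -⟩ := h' s
        rw [Matrix.det_of_upperTriangular (fun i j hij => h2 i j hij)]
        simp [h3]
      have hdetB' : ∀ s, (B' s).det ≠ 0 := by
        intro s
        obtain ⟨-, -, -, h4⟩ := h' s
        have : (ψ s).det = (B' s).det * (C' s).det := by rw [h4, Matrix.det_mul]
        intro hz
        exact hψdet' s (by rw [this, hz, zero_mul])
      set A12 : X → Matrix (Fin n) (Fin 1) ℂ :=
        fun s => (φ s).submatrix (e ∘ Sum.inl) (e ∘ Sum.inr) with hA12
      set A21 : X → Matrix (Fin 1) (Fin n) ℂ :=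
        fun s => (φ s).submatrix (e ∘ Sum.inr) (e ∘ Sum.inl) with hA21
      set A22 : X → Matrix (Fin 1) (Fin 1) ℂ :=
        fun s => (φ s).submatrix (e ∘ Sum.inr) (e ∘ Sum.inr) with hA22
      have hA12c : Continuous A12 := hφ.matrix_submatrix _ _
      have hA21c : Continuous A21 := hφ.matrix_submatrix _ _
      have hA22c : Continuous A22 := hφ.matrix_submatrix _ _
      set L : X → Matrix (Fin n ⊕ Fin 1) (Fin n ⊕ Fin 1) ℂ :=
        fun s => Matrix.fromBlocks (B' s) 0 (A21 s * (C' s)⁻¹)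
          (A22 s - A21 s * (ψ s)⁻¹ * A12 s) with hL
      set U : X → Matrix (Fin n ⊕ Fin 1) (Fin n ⊕ Fin 1) ℂ :=
        fun s => Matrix.fromBlocks (C' s) ((B' s)⁻¹ * A12 s) 0 1 with hU
      have hLc : Continuous L := by
        apply continuous_matrix
        rintro (i | i) (j | j)
        · simpa [hL] using hB'c.matrix_elem i j
        · simpa [hL] using continuous_const
        · simpa [hL] using (hA21c.matrix_mul (cont_matrix_inv hC'c
            (fun s => by rw [hdetC' s]; exact one_ne_zero))).matrix_elem i j
        · simpa [hL] using (hA22c.sub ((hA21c.matrix_mul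
            (cont_matrix_inv hψc hψdet')).matrix_mul hA12c)).matrix_elem i j
      have hUc : Continuous U := by
        apply continuous_matrix
        rintro (i | i) (j | j)
        · simpa [hU] using hC'c.matrix_elem i j
        · simpa [hU] using ((cont_matrix_inv hB'c hdetB').matrix_mul hA12c).matrix_elem i j
        · simpa [hU] using continuous_const
        · simpa [hU] using continuous_const
      refine ⟨fun s => (L s).submatrix e.symm e.symm,
        fun s => (U s).submatrix e.symm e.symm,
        hLc.matrix_submatrix _ _, hUc.matrix_submatrix _ _, fun s => ?_⟩
      obtain ⟨h1, h2, h3, h4⟩ := h' s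
      have hinvB : B' s * (B' s)⁻¹ = 1 :=
        Matrix.mul_nonsing_inv _ (Ne.isUnit (hdetB' s))
      have hinvC : (C' s)⁻¹ * C' s = 1 :=
        Matrix.nonsing_inv_mul _ (by rw [hdetC' s]; exact isUnit_one)
      refine ⟨?_, ?_, ?_, ?_⟩
      · intro i j hij
        rcases hi : e.symm i with i' | i' <;> rcases hj : e.symm j with j' | j' <;>
          simp only [Matrix.submatrix_apply, hi, hj, hL, Matrix.fromBlocks_apply₁₁,
            Matrix.fromBlocks_apply₁₂, Matrix.fromBlocks_apply₂₁, Matrix.fromBlocks_apply₂₂,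
            Matrix.zero_apply]
        · apply h1
          have hii : i = e (Sum.inl i') := (Equiv.symm_apply_eq e).mp hi
          have hjj : j = e (Sum.inl j') := (Equiv.symm_apply_eq e).mp hj
          rw [Fin.lt_def] at hij ⊢
          rwa [hii, hjj, hval1, hval1] at hij
        · exfalso
          have hii : i = e (Sum.inr i') := (Equiv.symm_apply_eq e).mp hi
          have hjj : j = e (Sum.inl j') := (Equiv.symm_apply_eq e).mp hj
          rw [Fin.lt_def, hii, hjj, hval2, hval1] at hij
          have := j'.isLt; omega
        · exfalso
          have hii : i = e (Sum.inr i') := (Equiv.symm_apply_eq e).mp hi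
          have hjj : j = e (Sum.inr j') := (Equiv.symm_apply_eq e).mp hj
          rw [Fin.lt_def, hii, hjj, hval2, hval2] at hij
          exact lt_irrefl _ hij
      · intro i j hij
        rcases hi : e.symm i with i' | i' <;> rcases hj : e.symm j with j' | j' <;>
          simp only [Matrix.submatrix_apply, hi, hj, hU, Matrix.fromBlocks_apply₁₁,
            Matrix.fromBlocks_apply₁₂, Matrix.fromBlocks_apply₂₁, Matrix.fromBlocks_apply₂₂,
            Matrix.zero_apply]
        · apply h2
          have hii : i = e (Sum.inl i') := (Equiv.symm_apply_eq e).mp hi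
          have hjj : j = e (Sum.inl j') := (Equiv.symm_apply_eq e).mp hj
          rw [Fin.lt_def] at hij ⊢
          rwa [hii, hjj, hval1, hval1] at hij
        · exfalso
          have hii : i = e (Sum.inl i') := (Equiv.symm_apply_eq e).mp hi
          have hjj : j = e (Sum.inr j') := (Equiv.symm_apply_eq e).mp hj
          rw [Fin.lt_def, hii, hjj, hval1, hval2] at hij
          have := i'.isLt; omega
        · exfalso
          have hii : i = e (Sum.inr i') := (Equiv.symm_apply_eq e).mp hi
          have hjj : j = e (Sum.inr j') := (Equiv.symm_apply_eq e).mp hj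
          rw [Fin.lt_def, hii, hjj, hval2, hval2] at hij
          exact lt_irrefl _ hij
      · intro i
        rcases hi : e.symm i with i' | i' <;>
          simp only [Matrix.submatrix_apply, hi, hU, Matrix.fromBlocks_apply₁₁,
            Matrix.fromBlocks_apply₂₂]
        · exact h3 i'
        · exact Matrix.one_apply_eq i'
      · rw [Matrix.submatrix_mul_equiv]
        have hLU : L s * U s =
            Matrix.fromBlocks (ψ s) (A12 s) (A21 s) (A22 s) := by
          rw [hL, hU, Matrix.fromBlocks_multiply]
          have k2 : B' s * ((B' s)⁻¹ * A12 s) = A12 s := by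
            rw [← Matrix.mul_assoc, hinvB, Matrix.one_mul]
          have k3 : A21 s * (C' s)⁻¹ * C' s = A21 s := by
            rw [Matrix.mul_assoc, hinvC, Matrix.mul_one]
          have k4 : A21 s * (C' s)⁻¹ * ((B' s)⁻¹ * A12 s)
              + (A22 s - A21 s * (ψ s)⁻¹ * A12 s) = A22 s := by
            have key : A21 s * (C' s)⁻¹ * ((B' s)⁻¹ * A12 s)
                = A21 s * (ψ s)⁻¹ * A12 s := by
              rw [h4, Matrix.mul_inv_rev]
              simp only [Matrix.mul_assoc]
            rw [key]; abel
          simp only [Matrix.zero_mul, Matrix.mul_zero, add_zero, zero_add, Matrix.mul_one]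
          rw [← h4, k2, k3, k4]
        rw [hLU]
        have : Matrix.fromBlocks (ψ s) (A12 s) (A21 s) (A22 s)
            = (φ s).submatrix e e := by
          ext (i | i) (j | j) <;>
            simp [hψ, hA12, hA21, hA22]
        rw [this, Matrix.submatrix_submatrix, Equiv.self_comp_symm, Matrix.submatrix_id_id]

/-- **Continuous LU decomposition in families.** If `φ : X → M_m(ℂ)` is a continuous
family of matrices all of whose leading principal minors are nonzero, then there are
continuous families `B` (lower triangular) and `C` (upper triangular with unit
diagonal) with `φ s = B s * C s` for all `s`. -/
theorem continuous_lu_decomposition (m : ℕ) (hm : 1 ≤ m)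
    (X : Type*) [TopologicalSpace X]
    (φ : X → Matrix (Fin m) (Fin m) ℂ) (hφ : Continuous φ)
    (hdet : ∀ s : X, ∀ k : ℕ, 1 ≤ k → ∀ hk : k ≤ m,
      ((φ s).submatrix (Fin.castLE hk) (Fin.castLE hk)).det ≠ 0) :
    ∃ B C : X → Matrix (Fin m) (Fin m) ℂ,
      Continuous B ∧ Continuous C ∧
      ∀ s : X,
        (∀ i j : Fin m, i < j → B s i j = 0) ∧
        (∀ i j : Fin m, j < i → C s i j = 0) ∧
        (∀ i : Fin m, C s i i = 1) ∧
        φ s = B s * C s := by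
  apply lu_aux m φ hφ
  intro s k hk
  rcases Nat.eq_zero_or_pos k with rfl | hk1
  · simp [Matrix.det_fin_zero]
  · exact hdet s k hk1 hk
end
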